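/- The kernel of the homomorphism π : J₃ → S₃ (sending s₁₂ to the transposition (1 2), s₂₃ to (2 3), and s₁₃ to (1 3)) equals the cyclic subgroup of J₃ generated by the single element (s₁₂·s₁₃)³. -/

import Mathlib

/-- Generators of the cactus group `J₃`. -/
inductive CactusGen : Type
  | s12 | s23 | s13
  deriving DecidableEq

open FreeGroup in
/-- Relators of the cactus group `J₃`:
`s₁₂² = s₂₃² = s₁₃² = 1`, `s₁₂·s₁₃ = s₁₃·s₂₃`, `s₂₃·s₁₃ = s₁₃·s₁₂`. -/
def cactusRels : Set (FreeGroup CactusGen) :=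
  { of .s12 * of .s12,
    of .s23 * of .s23,
    of .s13 * of .s13,
    of .s12 * of .s13 * (of .s13 * of .s23)⁻¹,
    of .s23 * of .s13 * (of .s13 * of .s12)⁻¹ }

/-- The cactus group `J₃` as a presented group. -/
abbrev J3 : Type := PresentedGroup cactusRels

def s12 : J3 := PresentedGroup.of .s12
def s23 : J3 := PresentedGroup.of .s23
def s13 : J3 := PresentedGroup.of .s13

/-- The images of the generators in the symmetric group on three letters:
`s₁₂ ↦ (1 2)`, `s₂₃ ↦ (2 3)`, `s₁₃ ↦ (1 3)`. -/
def genPerm : CactusGen → Equiv.Perm (Fin 3)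
  | .s12 => Equiv.swap 0 1
  | .s23 => Equiv.swap 1 2
  | .s13 => Equiv.swap 0 2

theorem cactusRels_hold : ∀ r ∈ cactusRels, FreeGroup.lift genPerm r = 1 := by
  intro r hr
  simp only [cactusRels, Set.mem_insert_iff, Set.mem_singleton_iff] at hr
  rcases hr with h | h | h | h | h <;> subst h <;>
    simp only [map_mul, map_inv, FreeGroup.lift_apply_of] <;> decide

/-- The canonical projection `π : J₃ → S₃`; its kernel is the pure cactus group `PJ₃`. -/
def piJ3 : J3 →* Equiv.Perm (Fin 3) := PresentedGroup.toGroup cactusRels_hold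

/- ### Auxiliary development: J₃ is the infinite dihedral group on s₁₂, s₁₃. -/

lemma rel_one (r : FreeGroup CactusGen) (hr : r ∈ cactusRels) :
    PresentedGroup.mk cactusRels r = 1 :=
  (QuotientGroup.eq_one_iff _).mpr (Subgroup.subset_normalClosure hr)

lemma s12_sq : s12 * s12 = 1 := by
  have := rel_one _ (show FreeGroup.of CactusGen.s12 * FreeGroup.of CactusGen.s12 ∈ cactusRels by
    simp [cactusRels])
  simpa [s12, PresentedGroup.of, map_mul] using this

lemma s13_sq : s13 * s13 = 1 := by
  have := rel_one _ (show FreeGroup.of CactusGen.s13 * FreeGroup.of CactusGen.s13 ∈ cactusRels by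
    simp [cactusRels])
  simpa [s13, PresentedGroup.of, map_mul] using this

lemma s23_eq : s23 = s13 * s12 * s13 := by
  have := rel_one _ (show FreeGroup.of CactusGen.s23 * FreeGroup.of CactusGen.s13 *
      (FreeGroup.of CactusGen.s13 * FreeGroup.of CactusGen.s12)⁻¹ ∈ cactusRels by
    simp [cactusRels])
  simp only [map_mul, map_inv] at this
  have h : s23 * s13 * (s13 * s12)⁻¹ = 1 := this
  have h2 : s23 * s13 = s13 * s12 := by
    have := mul_eq_one_iff_eq_inv.mp h
    simpa using this
  calc s23 = s23 * s13 * s13 := by rw [mul_assoc, s13_sq, mul_one]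
  _ = s13 * s12 * s13 := by rw [h2]

noncomputable def t : J3 := s12 * s13

lemma t_def : t = s12 * s13 := rfl

lemma s12_inv : s12⁻¹ = s12 := by
  rw [inv_eq_iff_mul_eq_one]; exact s12_sq

lemma s13_inv : s13⁻¹ = s13 := by
  rw [inv_eq_iff_mul_eq_one]; exact s13_sq

lemma conj_t : s12 * t * s12⁻¹ = t⁻¹ := by
  rw [s12_inv, t_def, mul_inv_rev, s12_inv, s13_inv,
    show s12 * (s12 * s13) = s13 from by rw [← mul_assoc, s12_sq, one_mul]]

lemma s12_mul_t_zpow (i : ℤ) : s12 * t ^ i = t ^ (-i) * s12 := by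
  have h := map_zpow (MulAut.conj s12) t i
  simp only [MulAut.conj_apply] at h
  rw [conj_t, inv_zpow, ← zpow_neg] at h
  calc s12 * t ^ i = s12 * t ^ i * s12⁻¹ * s12 := by group
  _ = t ^ (-i) * s12 := by rw [h]

/-- The definitional identification `ZMod 0 = ℤ`. -/
def zm : ZMod 0 → ℤ := fun i => i

lemma zm_add (i j : ZMod 0) : zm (i + j) = zm i + zm j := rfl
lemma zm_sub (i j : ZMod 0) : zm (i - j) = zm i - zm j := rfl

open DihedralGroup in
/-- The inverse map from the infinite dihedral group to `J₃`. -/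
noncomputable def sigmaFun : DihedralGroup 0 → J3
  | .r i => t ^ zm i
  | .sr i => s12 * t ^ zm i

lemma sigmaFun_mul (x y : DihedralGroup 0) :
    sigmaFun (x * y) = sigmaFun x * sigmaFun y := by
  rcases x with i | i <;> rcases y with j | j <;>
    simp only [DihedralGroup.r_mul_r, DihedralGroup.r_mul_sr, DihedralGroup.sr_mul_r,
      DihedralGroup.sr_mul_sr, sigmaFun]
  · rw [zm_add, zpow_add]
  · rw [zm_sub, show zm j - zm i = -zm i + zm j from by ring, zpow_add, ← mul_assoc,
      s12_mul_t_zpow, neg_neg, mul_assoc]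
  · rw [zm_add, zpow_add, mul_assoc]
  · have key : (s12 * t ^ zm i) * (s12 * t ^ zm j) = t ^ (zm j - zm i) := by
      rw [s12_mul_t_zpow, mul_assoc, ← mul_assoc s12, s12_sq, one_mul, ← zpow_add]
      congr 1
      ring
    rw [zm_sub, key]

noncomputable def sigma : DihedralGroup 0 →* J3 := MonoidHom.mk' sigmaFun sigmaFun_mul

def rhoGen : CactusGen → DihedralGroup 0
  | .s12 => .sr 0
  | .s23 => .sr 2
  | .s13 => .sr 1

theorem rhoRels_hold : ∀ r ∈ cactusRels, FreeGroup.lift rhoGen r = 1 := by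
  intro r hr
  simp only [cactusRels, Set.mem_insert_iff, Set.mem_singleton_iff] at hr
  rcases hr with h | h | h | h | h <;> subst h <;>
    simp only [map_mul, map_inv, FreeGroup.lift_apply_of, rhoGen] <;>
    simp [DihedralGroup.sr_mul_sr, DihedralGroup.r_mul_sr, DihedralGroup.r_mul_r,
      DihedralGroup.sr_mul_r, DihedralGroup.one_def, mul_inv_rev, -DihedralGroup.r_zero] <;>
    decide

def rho : J3 →* DihedralGroup 0 := PresentedGroup.toGroup rhoRels_hold

lemma sigma_rho (g : J3) : sigma (rho g) = g := by
  have h : sigma.comp rho = MonoidHom.id J3 := by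
    apply PresentedGroup.ext
    intro x
    cases x <;>
      simp only [MonoidHom.comp_apply, MonoidHom.id_apply, rho, PresentedGroup.toGroup.of,
        rhoGen, sigma, MonoidHom.mk'_apply, sigmaFun]
    · show s12 * t ^ (0 : ℤ) = s12
      simp
    · show s12 * t ^ (2 : ℤ) = s23
      rw [s23_eq, show (2 : ℤ) = 1 + 1 from rfl, zpow_add, zpow_one, t_def,
        show s12 * (s12 * s13 * (s12 * s13)) = s12 * s12 * (s13 * s12 * s13) from by group,
        s12_sq, one_mul]
    · show s12 * t ^ (1 : ℤ) = s13
      rw [zpow_one, t_def, ← mul_assoc, s12_sq, one_mul]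
  calc sigma (rho g) = (sigma.comp rho) g := rfl
  _ = g := by rw [h]; rfl

lemma pi_s12 : piJ3 s12 = Equiv.swap 0 1 := PresentedGroup.toGroup.of cactusRels_hold
lemma pi_s13 : piJ3 s13 = Equiv.swap 0 2 := PresentedGroup.toGroup.of cactusRels_hold

noncomputable def c : Equiv.Perm (Fin 3) := Equiv.swap 0 1 * Equiv.swap 0 2

lemma pi_t : piJ3 t = c := by
  rw [t_def, map_mul, pi_s12, pi_s13]; rfl

lemma orderOf_c : orderOf c = 3 := by
  haveI : Fact (Nat.Prime 3) := ⟨by norm_num⟩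
  refine orderOf_eq_prime ?_ ?_
  · show (Equiv.swap 0 1 * Equiv.swap 0 2 : Equiv.Perm (Fin 3)) ^ 3 = 1
    decide
  · show (Equiv.swap 0 1 * Equiv.swap 0 2 : Equiv.Perm (Fin 3)) ≠ 1
    decide

/-- the kernel of `π : J₃ → S₃` is the cyclic subgroup generated by
`(s₁₂·s₁₃)³`. -/
theorem ker_piJ3_eq_zpowers :
    MonoidHom.ker piJ3 = Subgroup.zpowers ((s12 * s13) ^ 3) := by
  apply le_antisymm
  · intro g hg
    have hg1 : piJ3 g = 1 := hg
    rcases hd : rho g with i | i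
    · -- g = t ^ i
      have hgt : g = t ^ zm i := by
        rw [← sigma_rho g, hd]; rfl
      have hc : c ^ zm i = 1 := by
        rw [← pi_t, ← map_zpow, ← hgt, hg1]
      have h3 : (3 : ℤ) ∣ zm i := by
        have := orderOf_dvd_iff_zpow_eq_one.mpr hc
        rwa [orderOf_c] at this
      obtain ⟨k, hk⟩ := h3
      refine ⟨k, ?_⟩
      show ((s12 * s13) ^ (3 : ℕ)) ^ k = g
      rw [← zpow_natCast, ← zpow_mul, ← t_def, hgt, hk]
      norm_num
    · -- g = s12 * t ^ i : odd permutation, contradiction with hg1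
      exfalso
      have hgt : g = s12 * t ^ zm i := by
        rw [← sigma_rho g, hd]; rfl
      have hsign : Equiv.Perm.sign (piJ3 g) = 1 := by rw [hg1]; rfl
      rw [hgt, map_mul, map_zpow, pi_s12, pi_t, map_mul, map_zpow] at hsign
      have hc : Equiv.Perm.sign c = 1 := by
        show Equiv.Perm.sign (Equiv.swap 0 1 * Equiv.swap 0 2 : Equiv.Perm (Fin 3)) = 1
        decide
      rw [hc, one_zpow, mul_one] at hsign
      have : Equiv.Perm.sign (Equiv.swap (0 : Fin 3) 1) = -1 := by decide
      rw [this] at hsign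
      exact absurd hsign (by decide)
  · rw [Subgroup.zpowers_le]
    show piJ3 ((s12 * s13) ^ 3) = 1
    rw [map_pow, map_mul, pi_s12, pi_s13]
    decide
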